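/- Let R ∈ ℝ^{MK × T} be any matrix each of whose columns is a column of the combination matrix R^c. If K ≥ 2 and L ≥ 1, then there exist matrices O_1, O_2 ∈ ℝ^{L × MK} with O_1 ≠ O_2 such that O_1 R = O_2 R. (Hence the emission matrix of the Gaussian factorial model is unidentifiable even given the true assignment matrix R.) -/

import Mathlib

/-- Unidentifiability of the factorial model: if every column of `R ∈ ℝ^{MK × T}` is a
column of the combination matrix `R^c`, `K ≥ 2` and `L ≥ 1`, then there exist two distinct
emission matrices `O₁ ≠ O₂` with `O₁ R = O₂ R`. -/
theorem factorial_model_unidentifiable (M K T L : ℕ) (hM : 0 < M) (hK : 2 ≤ K) (hL : 1 ≤ L)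
    (R : Matrix (Fin K × Fin M) (Fin T) ℝ)
    (hR : ∀ t : Fin T, ∃ f : Fin K → Fin M,
      ∀ (k : Fin K) (m : Fin M), R (k, m) t = if f k = m then 1 else 0) :
    ∃ O₁ O₂ : Matrix (Fin L) (Fin K × Fin M) ℝ, O₁ ≠ O₂ ∧ O₁ * R = O₂ * R := by
  have hK0 : (0 : ℕ) < K := by omega
  have hK1 : (1 : ℕ) < K := by omega
  set k0 : Fin K := ⟨0, hK0⟩
  set k1 : Fin K := ⟨1, hK1⟩
  set c : Fin K → ℝ := fun k =>
    (if k = k0 then (1 : ℝ) else 0) - (if k = k1 then (1 : ℝ) else 0) with hc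
  have hcsum : ∑ k : Fin K, c k = 0 := by
    simp [hc, Finset.sum_sub_distrib]
  refine ⟨0, Matrix.of (fun _ p => c p.1), ?_, ?_⟩
  · intro h
    have := congrFun (congrFun h.symm ⟨0, hL⟩) (k0, ⟨0, hM⟩)
    simp [hc, k0, k1] at this
  · ext l t
    obtain ⟨f, hf⟩ := hR t
    simp only [Matrix.mul_apply, Matrix.of_apply, Matrix.zero_apply, zero_mul, Finset.sum_const_zero]
    rw [Fintype.sum_prod_type]
    have : ∀ k : Fin K, ∑ m : Fin M, c k * R (k, m) t = c k := by
      intro k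
      rw [← Finset.mul_sum]
      have : ∑ m : Fin M, R (k, m) t = 1 := by
        simp [hf]
      rw [this, mul_one]
    rw [Finset.sum_congr rfl fun k _ => this k, hcsum]
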